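/- Let n = 2k be even with k ≥ 2, and let Λ_0 = (1,1,…,1,0) ∈ ℝ^n, so that A_{Λ_0} = (1/2,…,1/2,−1/2). Then σ_k(A_{Λ_0}) = 0 and σ_j(A_{Λ_0}) > 0 for every 1 ≤ j ≤ k−1; consequently A_{Λ_0} ∈ Γ_{k−1}^+ and A_{Λ_0} ∈ Γ̄_k^+. -/

import Mathlib

/-- The `k`-th elementary symmetric polynomial of `x : Fin n → ℝ`. -/
noncomputable def sigmaElem (n k : ℕ) (x : Fin n → ℝ) : ℝ :=
  ∑ s ∈ Finset.univ.powersetCard k, ∏ i ∈ s, x i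

/-- The Gårding cone `Γ_k^+ ⊆ ℝ^n`: the connected component of
`{σ_k > 0}` containing `(1, …, 1)`. -/
def GammaPlus (n k : ℕ) : Set (Fin n → ℝ) :=
  connectedComponentIn {x | 0 < sigmaElem n k x} (fun _ => 1)

/-- `A_Λ = Λ − (Σ_i λ_i / (2(n−1))) · (1,…,1)`. -/
noncomputable def ALam (n : ℕ) (Λ : Fin n → ℝ) : Fin n → ℝ :=
  fun i => Λ i - (∑ j, Λ j) / (2 * ((n : ℝ) - 1))

/-- for `n = 2k`, `k ≥ 2`, `Λ_0 = (1,…,1,0)` gives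
`A_{Λ_0} = (1/2,…,1/2,−1/2)`, `σ_k(A_{Λ_0}) = 0`, `σ_j(A_{Λ_0}) > 0` for
`1 ≤ j ≤ k−1`; hence `A_{Λ_0} ∈ Γ_{k−1}^+` and `A_{Λ_0} ∈ Γ̄_k^+`. -/
lemma sigma_aab (n j : ℕ) (hn : 1 ≤ n) (hj : 1 ≤ j) (a b : ℝ) :
    sigmaElem n j (fun i : Fin n => if (i : ℕ) = n - 1 then b else a)
      = ((n-1).choose j : ℝ) * a ^ j + ((n-1).choose (j-1) : ℝ) * a ^ (j-1) * b := by
  classical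
  have hn' : n - 1 < n := by omega
  set i₀ : Fin n := ⟨n - 1, hn'⟩ with hi₀
  have hiff : ∀ i : Fin n, ((i : ℕ) = n - 1) ↔ i = i₀ := fun i => by
    simp [hi₀, Fin.ext_iff]
  unfold sigmaElem
  rw [← Finset.sum_filter_add_sum_filter_not (Finset.univ.powersetCard j)
    (fun s => i₀ ∈ s)]
  have h1 : ∀ s ∈ (Finset.univ.powersetCard j).filter (fun s => i₀ ∈ s),
      (∏ i ∈ s, (fun i : Fin n => if (i : ℕ) = n - 1 then b else a) i)
        = a ^ (j-1) * b := by
    intro s hs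
    rw [Finset.mem_filter, Finset.mem_powersetCard] at hs
    obtain ⟨⟨-, hcard⟩, hmem⟩ := hs
    rw [← Finset.mul_prod_erase s _ hmem]
    have ha : ∀ i ∈ s.erase i₀,
        (fun i : Fin n => if (i : ℕ) = n - 1 then b else a) i = a := by
      intro i hi
      rw [Finset.mem_erase] at hi
      exact if_neg (fun h => hi.1 ((hiff i).mp h))
    rw [if_pos (show ((i₀:Fin n):ℕ) = n - 1 from rfl), Finset.prod_congr rfl ha, Finset.prod_const,
      Finset.card_erase_of_mem hmem, hcard]
    ring
  have h2 : ∀ s ∈ (Finset.univ.powersetCard j).filter (fun s => ¬ i₀ ∈ s),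
      (∏ i ∈ s, (fun i : Fin n => if (i : ℕ) = n - 1 then b else a) i) = a ^ j := by
    intro s hs
    rw [Finset.mem_filter, Finset.mem_powersetCard] at hs
    obtain ⟨⟨-, hcard⟩, hmem⟩ := hs
    have ha : ∀ i ∈ s,
        (fun i : Fin n => if (i : ℕ) = n - 1 then b else a) i = a := by
      intro i hi
      exact if_neg (fun h => hmem (((hiff i).mp h) ▸ hi))
    rw [Finset.prod_congr rfl ha, Finset.prod_const, hcard]
  rw [Finset.sum_congr rfl h1, Finset.sum_congr rfl h2, Finset.sum_const,
    Finset.sum_const]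
  have hcard_not : ((Finset.univ.powersetCard j).filter (fun s => ¬ i₀ ∈ s)).card
      = (n-1).choose j := by
    have he : (Finset.univ.powersetCard j).filter (fun s => ¬ i₀ ∈ s)
        = (Finset.univ.erase i₀).powersetCard j := by
      ext s
      simp only [Finset.mem_filter, Finset.mem_powersetCard, Finset.subset_erase,
        Finset.subset_univ, true_and]
      tauto
    rw [he, Finset.card_powersetCard, Finset.card_erase_of_mem (Finset.mem_univ _),
      Finset.card_univ, Fintype.card_fin]
  have hcard_mem : ((Finset.univ.powersetCard j).filter (fun s => i₀ ∈ s)).card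
      = (n-1).choose (j-1) := by
    have hsum : ((Finset.univ.powersetCard j).filter (fun s => i₀ ∈ s)).card
        + ((Finset.univ.powersetCard j).filter (fun s => ¬ i₀ ∈ s)).card
        = (Finset.univ.powersetCard j).card :=
      Finset.card_filter_add_card_filter_not
        (s := ((Finset.univ : Finset (Fin n)).powersetCard j)) (fun s => i₀ ∈ s)
    have htot : ((Finset.univ : Finset (Fin n)).powersetCard j).card = n.choose j := by
      rw [Finset.card_powersetCard, Finset.card_univ, Fintype.card_fin]
    have hp := Nat.choose_succ_succ (n-1) (j-1)
    simp only [Nat.succ_eq_add_one] at hp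
    rw [show n - 1 + 1 = n by omega, show j - 1 + 1 = j by omega] at hp
    omega
  rw [hcard_not, hcard_mem]
  ring

lemma choose_strict (m l : ℕ) (h2 : 2 * l + 1 < m) :
    m.choose l < m.choose (l + 1) := by
  have key := Nat.choose_succ_right_eq m l
  have hpos : 0 < m.choose l := Nat.choose_pos (by omega)
  have h1 : m.choose l * (l + 1) < m.choose l * (m - l) :=
    Nat.mul_lt_mul_of_pos_left (by omega) hpos
  rw [← key] at h1
  exact Nat.lt_of_mul_lt_mul_right h1


set_option maxHeartbeats 1000000 in
theorem stmt11 (k : ℕ) (hk : 2 ≤ k)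
    (Λ₀ : Fin (2 * k) → ℝ)
    (hΛ₀ : Λ₀ = fun i : Fin (2 * k) => if (i : ℕ) = 2 * k - 1 then 0 else 1) :
    ALam (2 * k) Λ₀ =
      (fun i : Fin (2 * k) => if (i : ℕ) = 2 * k - 1 then -(1 / 2 : ℝ) else 1 / 2) ∧
    sigmaElem (2 * k) k (ALam (2 * k) Λ₀) = 0 ∧
    (∀ j, 1 ≤ j → j ≤ k - 1 → 0 < sigmaElem (2 * k) j (ALam (2 * k) Λ₀)) ∧
    ALam (2 * k) Λ₀ ∈ GammaPlus (2 * k) (k - 1) ∧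
    ALam (2 * k) Λ₀ ∈ closure (GammaPlus (2 * k) k) := by
  obtain ⟨p, rfl⟩ : ∃ p, k = p + 2 := ⟨k - 2, by omega⟩
  subst hΛ₀
  have hN1 : 2 * (p + 2) - 1 = 2 * p + 3 := by omega
  -- the sum of the entries of Λ₀
  have hi₀lt : 2 * (p + 2) - 1 < 2 * (p + 2) := by omega
  set i₀ : Fin (2 * (p + 2)) := ⟨2 * (p + 2) - 1, hi₀lt⟩ with hi₀
  have hsum : (∑ j : Fin (2 * (p + 2)),
      (if (j : ℕ) = 2 * (p + 2) - 1 then (0:ℝ) else 1)) = 2 * (p:ℝ) + 3 := by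
    have hterm : ∀ j : Fin (2 * (p + 2)),
        (if (j : ℕ) = 2 * (p + 2) - 1 then (0:ℝ) else 1)
          = 1 - (if j = i₀ then (1:ℝ) else 0) := by
      intro j
      by_cases h : j = i₀
      · rw [if_pos h, if_pos (by simp [h, hi₀])]; ring
      · rw [if_neg h, if_neg (fun hc => h (Fin.ext (by simp [hi₀, hc])))]; ring
    rw [Finset.sum_congr rfl (fun j _ => hterm j), Finset.sum_sub_distrib,
      Finset.sum_const, Finset.sum_ite_eq' Finset.univ i₀ (fun _ => (1:ℝ)),
      if_pos (Finset.mem_univ _), Finset.card_univ, Fintype.card_fin]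
    ring_nf
  have hA : ALam (2 * (p + 2))
        (fun i : Fin (2 * (p + 2)) => if (i : ℕ) = 2 * (p + 2) - 1 then (0:ℝ) else 1)
      = (fun i : Fin (2 * (p + 2)) =>
          if (i : ℕ) = 2 * (p + 2) - 1 then -(1 / 2 : ℝ) else 1 / 2) := by
    funext i
    show (if (i : ℕ) = 2 * (p + 2) - 1 then (0:ℝ) else 1)
        - (∑ j : Fin (2 * (p + 2)),
            (if (j : ℕ) = 2 * (p + 2) - 1 then (0:ℝ) else 1))
          / (2 * (((2 * (p + 2) : ℕ) : ℝ) - 1)) = _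
    rw [hsum]
    have hcast : ((2 * (p + 2) : ℕ) : ℝ) = 2 * (p:ℝ) + 4 := by push_cast; ring
    rw [hcast]
    have hdiv : (2 * (p:ℝ) + 3) / (2 * (2 * (p:ℝ) + 4 - 1)) = 1 / 2 := by
      have hp0 : (0:ℝ) ≤ (p:ℝ) := Nat.cast_nonneg p
      rw [div_eq_iff (by nlinarith)]
      ring
    rw [hdiv]
    by_cases h : (i : ℕ) = 2 * (p + 2) - 1
    · rw [if_pos h, if_pos h]; ring
    · rw [if_neg h, if_neg h]; ring
  have hchoose_symm : (2 * p + 3).choose (p + 2) = (2 * p + 3).choose (p + 1) := by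
    have h := Nat.choose_symm (show p + 2 ≤ 2 * p + 3 by omega)
    rw [show 2 * p + 3 - (p + 2) = p + 1 by omega] at h
    exact h.symm
  -- σ_k vanishes
  have hsk : sigmaElem (2 * (p + 2)) (p + 2)
      (ALam (2 * (p + 2)) (fun i : Fin (2 * (p + 2)) =>
        if (i : ℕ) = 2 * (p + 2) - 1 then (0:ℝ) else 1)) = 0 := by
    rw [hA, sigma_aab (2 * (p + 2)) (p + 2) (by omega) (by omega) (1/2) (-(1/2)),
      hN1, show p + 2 - 1 = p + 1 from rfl, hchoose_symm]
    ring
  -- σ_j positive for 1 ≤ j ≤ p + 1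
  have hsj : ∀ j, 1 ≤ j → j ≤ p + 2 - 1 → 0 < sigmaElem (2 * (p + 2)) j
      (ALam (2 * (p + 2)) (fun i : Fin (2 * (p + 2)) =>
        if (i : ℕ) = 2 * (p + 2) - 1 then (0:ℝ) else 1)) := by
    intro j hj1 hj2
    obtain ⟨l, rfl⟩ : ∃ l, j = l + 1 := ⟨j - 1, by omega⟩
    rw [hA, sigma_aab (2 * (p + 2)) (l + 1) (by omega) (by omega) (1/2) (-(1/2)),
      hN1, show l + 1 - 1 = l from rfl, pow_succ]
    have hC : ((2 * p + 3).choose l : ℝ) < ((2 * p + 3).choose (l + 1) : ℝ) := by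
      exact_mod_cast choose_strict (2 * p + 3) l (by omega)
    have hpow : (0:ℝ) < (1/2 : ℝ) ^ l := by positivity
    nlinarith [mul_pos (sub_pos.mpr hC) hpow]
  -- membership in Γ_{k-1}
  have hseg1 : segment ℝ (fun _ : Fin (2 * (p + 2)) => (1:ℝ))
      (fun i : Fin (2 * (p + 2)) =>
        if (i : ℕ) = 2 * (p + 2) - 1 then -(1 / 2 : ℝ) else 1 / 2)
      ⊆ {x | 0 < sigmaElem (2 * (p + 2)) (p + 1) x} := by
    intro x hx
    rw [segment_eq_image] at hx
    obtain ⟨t, ht, rfl⟩ := hx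
    rw [Set.mem_Icc] at ht
    have hxeq : ((1 - t) • (fun _ : Fin (2 * (p + 2)) => (1:ℝ))
          + t • (fun i : Fin (2 * (p + 2)) =>
            if (i : ℕ) = 2 * (p + 2) - 1 then -(1 / 2 : ℝ) else 1 / 2))
        = fun i : Fin (2 * (p + 2)) =>
            if (i : ℕ) = 2 * (p + 2) - 1 then (1 - 3 * t / 2) else (1 - t / 2) := by
      funext i
      by_cases h : (i : ℕ) = 2 * (p + 2) - 1 <;>
        simp only [Pi.add_apply, Pi.smul_apply, smul_eq_mul, if_pos, if_neg, h,
          if_true, if_false, ite_true, ite_false] <;> ring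
    simp only [Set.mem_setOf_eq]
    rw [hxeq,
      sigma_aab (2 * (p + 2)) (p + 1) (by omega) (by omega), hN1,
      show p + 1 - 1 = p from rfl]
    have ha : 0 < 1 - t / 2 := by linarith [ht.2]
    have hab : 0 ≤ (1 - t / 2) + (1 - 3 * t / 2) := by linarith [ht.2]
    have hC : ((2 * p + 3).choose p : ℝ) < ((2 * p + 3).choose (p + 1) : ℝ) := by
      exact_mod_cast choose_strict (2 * p + 3) p (by omega)
    have hC2 : (0:ℝ) ≤ ((2 * p + 3).choose p : ℝ) := Nat.cast_nonneg _
    have key : 0 < ((2 * p + 3).choose (p + 1) : ℝ) * (1 - t / 2)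
        + ((2 * p + 3).choose p : ℝ) * (1 - 3 * t / 2) := by
      nlinarith [mul_nonneg hC2 hab, mul_pos (sub_pos.mpr hC) ha]
    have hrw : ((2 * p + 3).choose (p + 1) : ℝ) * (1 - t / 2) ^ (p + 1)
          + ((2 * p + 3).choose p : ℝ) * (1 - t / 2) ^ p * (1 - 3 * t / 2)
        = (1 - t / 2) ^ p * (((2 * p + 3).choose (p + 1) : ℝ) * (1 - t / 2)
            + ((2 * p + 3).choose p : ℝ) * (1 - 3 * t / 2)) := by ring
    rw [hrw]
    exact mul_pos (pow_pos ha p) key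
  have hmem1 : (fun i : Fin (2 * (p + 2)) =>
        if (i : ℕ) = 2 * (p + 2) - 1 then -(1 / 2 : ℝ) else 1 / 2)
      ∈ GammaPlus (2 * (p + 2)) (p + 1) :=
    (convex_segment _ _).isPreconnected.subset_connectedComponentIn
      (left_mem_segment ℝ _ _) hseg1 (right_mem_segment ℝ _ _)
  -- perturbed points lie in Γ_k
  have hGk : ∀ ε : ℝ, 0 < ε →
      (fun i : Fin (2 * (p + 2)) =>
        if (i : ℕ) = 2 * (p + 2) - 1 then -(1 / 2 : ℝ) + ε else 1 / 2 + ε)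
      ∈ GammaPlus (2 * (p + 2)) (p + 2) := by
    intro ε hε
    have hseg : segment ℝ (fun _ : Fin (2 * (p + 2)) => (1:ℝ))
        (fun i : Fin (2 * (p + 2)) =>
          if (i : ℕ) = 2 * (p + 2) - 1 then -(1 / 2 : ℝ) + ε else 1 / 2 + ε)
        ⊆ {x | 0 < sigmaElem (2 * (p + 2)) (p + 2) x} := by
      intro x hx
      rw [segment_eq_image] at hx
      obtain ⟨t, ht, rfl⟩ := hx
      rw [Set.mem_Icc] at ht
      have hxeq : ((1 - t) • (fun _ : Fin (2 * (p + 2)) => (1:ℝ))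
            + t • (fun i : Fin (2 * (p + 2)) =>
              if (i : ℕ) = 2 * (p + 2) - 1 then -(1 / 2 : ℝ) + ε else 1 / 2 + ε))
          = fun i : Fin (2 * (p + 2)) =>
              if (i : ℕ) = 2 * (p + 2) - 1 then (1 - 3 * t / 2 + t * ε)
              else (1 - t / 2 + t * ε) := by
        funext i
        by_cases h : (i : ℕ) = 2 * (p + 2) - 1 <;>
          simp only [Pi.add_apply, Pi.smul_apply, smul_eq_mul, h,
            if_true, if_false, ite_true, ite_false] <;> ring
      simp only [Set.mem_setOf_eq]
      rw [hxeq,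
        sigma_aab (2 * (p + 2)) (p + 2) (by omega) (by omega), hN1,
        show p + 2 - 1 = p + 1 from rfl, hchoose_symm]
      have ha : 0 < 1 - t / 2 + t * ε := by
        nlinarith [mul_nonneg ht.1 hε.le, ht.2]
      have hab : 0 < (1 - t / 2 + t * ε) + (1 - 3 * t / 2 + t * ε) := by
        rcases lt_or_ge t 1 with h | h
        · nlinarith [mul_nonneg ht.1 hε.le]
        · have ht1 : t = 1 := le_antisymm ht.2 h
          rw [ht1]; nlinarith
      have hCpos : (0:ℝ) < ((2 * p + 3).choose (p + 1) : ℝ) :=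
        Nat.cast_pos.mpr (Nat.choose_pos (by omega))
      have hrw : ((2 * p + 3).choose (p + 1) : ℝ) * (1 - t / 2 + t * ε) ^ (p + 2)
            + ((2 * p + 3).choose (p + 1) : ℝ) * (1 - t / 2 + t * ε) ^ (p + 1)
              * (1 - 3 * t / 2 + t * ε)
          = ((2 * p + 3).choose (p + 1) : ℝ) * (1 - t / 2 + t * ε) ^ (p + 1)
              * ((1 - t / 2 + t * ε) + (1 - 3 * t / 2 + t * ε)) := by ring
      rw [hrw]
      exact mul_pos (mul_pos hCpos (pow_pos ha (p + 1))) hab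
    exact (convex_segment _ _).isPreconnected.subset_connectedComponentIn
      (left_mem_segment ℝ _ _) hseg (right_mem_segment ℝ _ _)
  -- closure membership via a sequence
  have htend : Filter.Tendsto
      (fun m : ℕ => (fun i : Fin (2 * (p + 2)) =>
        if (i : ℕ) = 2 * (p + 2) - 1 then -(1 / 2 : ℝ) + 1 / ((m:ℝ) + 1)
        else 1 / 2 + 1 / ((m:ℝ) + 1)))
      Filter.atTop (nhds (fun i : Fin (2 * (p + 2)) =>
        if (i : ℕ) = 2 * (p + 2) - 1 then -(1 / 2 : ℝ) else 1 / 2)) := by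
    rw [tendsto_pi_nhds]
    intro i
    by_cases h : (i : ℕ) = 2 * (p + 2) - 1
    · simp only [h, ite_true, if_pos]
      simpa using tendsto_one_div_add_atTop_nhds_zero_nat.const_add (-(1/2 : ℝ))
    · simp only [h, ite_false, if_neg, if_false]
      simpa using tendsto_one_div_add_atTop_nhds_zero_nat.const_add (1/2 : ℝ)
  have hclos : (fun i : Fin (2 * (p + 2)) =>
        if (i : ℕ) = 2 * (p + 2) - 1 then -(1 / 2 : ℝ) else 1 / 2)
      ∈ closure (GammaPlus (2 * (p + 2)) (p + 2)) :=
    mem_closure_of_tendsto htend (Filter.Eventually.of_forall fun m =>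
      hGk (1 / ((m:ℝ) + 1)) (by positivity))
  refine ⟨hA, hsk, hsj, ?_, ?_⟩
  · rw [hA]; exact hmem1
  · rw [hA]; exact hclos
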